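/- Let S and r be parameters with 0 < S < 4r, let u₀ be the standing wave, and let C > 0 be the constant such that lim_{x→+∞} |u₀'(x)|·e^{√S·x} = C. Define v₀(x) = u₀'(x)·∫₀ˣ (u₀'(z))⁻²·e^{−(4S/r)(u₀(z)² − u₀(z))} dz. Then lim_{x→+∞} |v₀(x)|·e^{−√S·x} = 1/(2C√S); in particular v₀ is unbounded on ℝ. -/

import Mathlib

open Real Filter Topology intervalIntegral

lemma hasDerivAt_nonpos_of_antitone {f : ℝ → ℝ} {f' x : ℝ} (hf : Antitone f)
    (h : HasDerivAt f f' x) : f' ≤ 0 := by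
  have h' := hasDerivAt_iff_tendsto_slope.mp h
  have h2 : Tendsto (slope f x) (𝓝[>] x) (𝓝 f') :=
    h'.mono_left (nhdsWithin_mono x fun y hy => ne_of_gt hy)
  refine le_of_tendsto h2 ?_
  filter_upwards [self_mem_nhdsWithin] with y hy
  have hxy : x < y := hy
  have : f y ≤ f x := hf hxy.le
  rw [slope_def_field]
  exact div_nonpos_of_nonpos_of_nonneg (by linarith) (by linarith)

lemma cont_exp_lin (c d : ℝ) : Continuous fun z : ℝ => c * Real.exp (d * z) :=
  continuous_const.mul (Real.continuous_exp.comp (continuous_const.mul continuous_id))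

lemma exp_integral_aux {a : ℝ} (ha : 0 < a) (c T x : ℝ) :
    ∫ z in T..x, c * Real.exp (2 * a * z)
      = c * (Real.exp (2 * a * x) - Real.exp (2 * a * T)) / (2 * a) := by
  have F' : ∀ z : ℝ, HasDerivAt (fun z => c / (2 * a) * Real.exp (2 * a * z))
      (c * Real.exp (2 * a * z)) z := by
    intro z
    have h1 : HasDerivAt (fun z : ℝ => 2 * a * z) (2 * a) z := by
      simpa using (hasDerivAt_id z).const_mul (2 * a)
    have h3 := h1.exp.const_mul (c / (2 * a))
    refine h3.congr_deriv ?_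
    field_simp
  rw [intervalIntegral.integral_eq_sub_of_hasDerivAt (fun z _ => F' z)
    ((cont_exp_lin c (2*a)).intervalIntegrable _ _)]
  field_simp

lemma key_tendsto {a L : ℝ} (ha : 0 < a) {h : ℝ → ℝ}
    (hcont : ContinuousOn h (Set.Ici 0))
    (hlim : Tendsto (fun z => h z * Real.exp (-(2 * a) * z)) atTop (𝓝 L)) :
    Tendsto (fun x => (∫ z in (0:ℝ)..x, h z) * Real.exp (-(2 * a) * x)) atTop
      (𝓝 (L / (2 * a))) := by
  have ha' : a ≠ 0 := ha.ne'
  rw [Metric.tendsto_atTop] at hlim ⊢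
  intro ε hε
  obtain ⟨T₀, hT₀⟩ := hlim (a * ε / 2) (by positivity)
  set T : ℝ := max T₀ 0 with hTdef
  have hT0 : (0:ℝ) ≤ T := le_max_right _ _
  have hTT₀ : T₀ ≤ T := le_max_left _ _
  set A : ℝ := ∫ z in (0:ℝ)..T, h z with hA
  set K : ℝ := |A| + |L| * Real.exp (2 * a * T) / (2 * a) with hK
  have hexp0 : Tendsto (fun x : ℝ => Real.exp (-(2 * a) * x)) atTop (𝓝 0) := by
    have h1 : Tendsto (fun x : ℝ => 2 * a * x) atTop atTop :=
      Tendsto.const_mul_atTop (by positivity) tendsto_id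
    have h2 : Tendsto (fun x : ℝ => -(2 * a * x)) atTop atBot :=
      tendsto_neg_atBot_iff.mpr h1
    exact (Real.tendsto_exp_atBot.comp h2).congr fun x => by rw [Function.comp, neg_mul]
  have hKexp : Tendsto (fun x : ℝ => K * Real.exp (-(2 * a) * x)) atTop (𝓝 0) := by
    simpa using hexp0.const_mul K
  rw [Metric.tendsto_atTop] at hKexp
  obtain ⟨N₁, hN₁⟩ := hKexp (ε / 2) (by positivity)
  refine ⟨max N₁ T, fun x hx => ?_⟩
  have hTx : T ≤ x := le_trans (le_max_right _ _) hx
  have hN₁x : N₁ ≤ x := le_trans (le_max_left _ _) hx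
  have hI1 : IntervalIntegrable h MeasureTheory.volume 0 T :=
    (hcont.mono (by rw [Set.uIcc_of_le hT0]; exact fun z hz => hz.1)).intervalIntegrable
  have hI2 : IntervalIntegrable h MeasureTheory.volume T x :=
    (hcont.mono (by rw [Set.uIcc_of_le hTx]; exact fun z hz => le_trans hT0 hz.1)).intervalIntegrable
  have hsplit : (∫ z in (0:ℝ)..x, h z) = A + ∫ z in T..x, h z := by
    rw [hA, intervalIntegral.integral_add_adjacent_intervals hI1 hI2]
  set R : ℝ := ∫ z in T..x, (h z - L * Real.exp (2 * a * z)) with hR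
  have hJsplit : (∫ z in T..x, h z)
      = R + L * (Real.exp (2 * a * x) - Real.exp (2 * a * T)) / (2 * a) := by
    have hIc : IntervalIntegrable (fun z => L * Real.exp (2 * a * z))
        MeasureTheory.volume T x := (cont_exp_lin L (2*a)).intervalIntegrable _ _
    have h5 := intervalIntegral.integral_sub hI2 hIc
    rw [hR, h5, exp_integral_aux ha]
    ring
  have hRe : |R| ≤ a * ε / 2 * (Real.exp (2 * a * x) - Real.exp (2 * a * T)) / (2 * a) := by
    have habs : |R| ≤ ∫ z in T..x, |h z - L * Real.exp (2 * a * z)| :=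
      intervalIntegral.abs_integral_le_integral_abs hTx
    have hmono : (∫ z in T..x, |h z - L * Real.exp (2 * a * z)|)
        ≤ ∫ z in T..x, a * ε / 2 * Real.exp (2 * a * z) := by
      have hIabs : IntervalIntegrable (fun z => |h z - L * Real.exp (2 * a * z)|)
          MeasureTheory.volume T x := by
        apply ContinuousOn.intervalIntegrable
        exact ((hcont.mono (by rw [Set.uIcc_of_le hTx]; exact fun z hz => le_trans hT0 hz.1)).sub
          ((cont_exp_lin L (2*a)).continuousOn)).abs
      have hIc2 : IntervalIntegrable (fun z => a * ε / 2 * Real.exp (2 * a * z))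
          MeasureTheory.volume T x := (cont_exp_lin (a*ε/2) (2*a)).intervalIntegrable _ _
      refine intervalIntegral.integral_mono_on hTx hIabs hIc2 fun z hz => ?_
      have hzT : T₀ ≤ z := le_trans hTT₀ hz.1
      have hd := hT₀ z hzT
      rw [Real.dist_eq] at hd
      have hee : Real.exp (-(2 * a) * z) * Real.exp (2 * a * z) = 1 := by
        rw [← Real.exp_add]; ring_nf; exact Real.exp_zero
      have hkey : (h z * Real.exp (-(2 * a) * z) - L) * Real.exp (2 * a * z)
          = h z - L * Real.exp (2 * a * z) := by
        linear_combination h z * hee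
      rw [← hkey, abs_mul, abs_of_pos (Real.exp_pos _)]
      exact mul_le_mul_of_nonneg_right hd.le (Real.exp_pos _).le
    calc |R| ≤ _ := habs
      _ ≤ _ := hmono
      _ = _ := by rw [exp_integral_aux ha]
  rw [Real.dist_eq]
  have hEpos : 0 < Real.exp (-(2 * a) * x) := Real.exp_pos _
  have hee : Real.exp (2 * a * x) * Real.exp (-(2 * a) * x) = 1 := by
    rw [← Real.exp_add]; ring_nf; exact Real.exp_zero
  have hiden : (∫ z in (0:ℝ)..x, h z) * Real.exp (-(2 * a) * x) - L / (2 * a)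
      = (A + R) * Real.exp (-(2 * a) * x)
        - L * Real.exp (2 * a * T) / (2 * a) * Real.exp (-(2 * a) * x) := by
    rw [hsplit, hJsplit]
    linear_combination (L / (2 * a)) * hee
  rw [hiden]
  set Q : ℝ := L * Real.exp (2 * a * T) / (2 * a) with hQ
  have hQabs : |Q| = |L| * Real.exp (2 * a * T) / (2 * a) := by
    rw [hQ, abs_div, abs_mul, abs_of_pos (Real.exp_pos _),
      abs_of_pos (by positivity : (0:ℝ) < 2 * a)]
  have hb1 : |(A + R) * Real.exp (-(2 * a) * x) - Q * Real.exp (-(2 * a) * x)|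
      ≤ K * Real.exp (-(2 * a) * x) + |R| * Real.exp (-(2 * a) * x) := by
    rw [← sub_mul, abs_mul, abs_of_pos hEpos]
    have h1 : |A + R - Q| ≤ |A + R| + |Q| := by
      rw [sub_eq_add_neg]
      exact (abs_add_le _ _).trans (by rw [abs_neg])
    have h2 : |A + R| ≤ |A| + |R| := abs_add_le _ _
    have h3 : |A + R - Q| ≤ K + |R| := by rw [hK, ← hQabs]; linarith
    exact (mul_le_mul_of_nonneg_right h3 hEpos.le).trans_eq (by ring)
  have hb2 : |R| * Real.exp (-(2 * a) * x) ≤ ε / 4 := by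
    have h1 : |R| ≤ a * ε / 2 * Real.exp (2 * a * x) / (2 * a) := by
      refine hRe.trans ?_
      have h7 : Real.exp (2 * a * x) - Real.exp (2 * a * T) ≤ Real.exp (2 * a * x) := by
        linarith [Real.exp_pos (2 * a * T)]
      gcongr
    have h4 : a * ε / 2 * Real.exp (2 * a * x) / (2 * a) * Real.exp (-(2 * a) * x)
        = ε / 4 * (Real.exp (2 * a * x) * Real.exp (-(2 * a) * x)) := by
      field_simp; ring
    calc |R| * Real.exp (-(2 * a) * x)
        ≤ a * ε / 2 * Real.exp (2 * a * x) / (2 * a) * Real.exp (-(2 * a) * x) :=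
          mul_le_mul_of_nonneg_right h1 hEpos.le
      _ = ε / 4 := by rw [h4, hee, mul_one]
  have hb3 : K * Real.exp (-(2 * a) * x) < ε / 2 := by
    have h6 := hN₁ x hN₁x
    rw [Real.dist_eq] at h6
    have h0 : 0 ≤ K * Real.exp (-(2 * a) * x) := by
      have : (0:ℝ) ≤ K := by rw [hK]; positivity
      positivity
    rwa [sub_zero, abs_of_nonneg h0] at h6
  calc |(A + R) * Real.exp (-(2 * a) * x) - Q * Real.exp (-(2 * a) * x)|
      ≤ K * Real.exp (-(2 * a) * x) + |R| * Real.exp (-(2 * a) * x) := hb1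
    _ < ε / 2 + ε / 4 := add_lt_add_of_lt_of_le hb3 hb2
    _ < ε := by linarith
noncomputable def fpoly (u : ℝ) : ℝ := u * (2 * u - 1) * (1 - u)

noncomputable def vzero (S r : ℝ) (u₀ : ℝ → ℝ) : ℝ → ℝ := fun x =>
  deriv u₀ x * ∫ z in (0:ℝ)..x,
    ((deriv u₀ z) ^ 2)⁻¹ * Real.exp (-(4 * S / r) * ((u₀ z) ^ 2 - u₀ z))

theorem vzero_asymptotics (S r : ℝ) (hS : 0 < S) (hSr : S < 4 * r)
    (u₀ : ℝ → ℝ) (hu : ContDiff ℝ 2 u₀)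
    (hode : ∀ x : ℝ, deriv (deriv u₀) x + S * fpoly (u₀ x)
      + (2 * S / r) * (2 * u₀ x - 1) * (deriv u₀ x) ^ 2 = 0)
    (hlim1 : Tendsto u₀ atBot (𝓝 1)) (hlim0 : Tendsto u₀ atTop (𝓝 0))
    (hnorm : u₀ 0 = 1 / 2) (hmono : StrictAnti u₀)
    (hbound : ∀ x : ℝ, 0 < u₀ x ∧ u₀ x < 1)
    (C : ℝ) (hC : 0 < C)
    (hCasym : Tendsto (fun x : ℝ => |deriv u₀ x| * Real.exp (Real.sqrt S * x))
      atTop (𝓝 C)) :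
    Tendsto (fun x : ℝ => |vzero S r u₀ x| * Real.exp (-(Real.sqrt S) * x)) atTop
        (𝓝 (1 / (2 * C * Real.sqrt S))) ∧
      ¬ ∃ M : ℝ, ∀ x : ℝ, |vzero S r u₀ x| ≤ M := by
  have hr : 0 < r := by linarith
  set a : ℝ := Real.sqrt S with ha_def
  have ha : 0 < a := Real.sqrt_pos.mpr hS
  set w : ℝ → ℝ := deriv u₀ with hw_def
  -- differentiability facts
  have hu2 : ContDiff ℝ ((1:ℕ) + 1) u₀ := by norm_num; exact hu
  have hder : ContDiff ℝ 1 w := by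
    rw [contDiff_succ_iff_deriv] at hu2
    exact hu2.2.2
  have hu_diff : Differentiable ℝ u₀ := by
    rw [contDiff_succ_iff_deriv] at hu2
    exact hu2.1
  have hw_diff : Differentiable ℝ w := hder.differentiable one_ne_zero
  have hw_cont : Continuous w := hw_diff.continuous
  -- energy function
  set E : ℝ → ℝ := fun x => Real.exp ((4 * S / r) * ((u₀ x) ^ 2 - u₀ x)) * (w x) ^ 2 with hE_def
  have hE : ∀ x : ℝ, HasDerivAt E
      (-2 * S * Real.exp ((4 * S / r) * ((u₀ x) ^ 2 - u₀ x)) * fpoly (u₀ x) * w x) x := by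
    intro x
    have hu' : HasDerivAt u₀ (w x) x := (hu_diff x).hasDerivAt
    have hw' : HasDerivAt w (deriv w x) x := (hw_diff x).hasDerivAt
    have hp : HasDerivAt (fun x => (4 * S / r) * ((u₀ x) ^ 2 - u₀ x))
        ((4 * S / r) * (2 * u₀ x ^ 1 * w x - w x)) x :=
      ((hu'.pow 2).sub hu').const_mul (4 * S / r)
    have hexp := hp.exp
    have hw2 : HasDerivAt (fun x => (w x) ^ 2) (2 * w x ^ 1 * deriv w x) x := hw'.pow 2
    have hmul := hexp.mul hw2
    refine hmul.congr_deriv ?_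
    have hodex : deriv w x = -(S * fpoly (u₀ x) + (2 * S / r) * (2 * u₀ x - 1) * (w x) ^ 2) := by
      have := hode x
      linarith
    rw [hodex, fpoly]
    field_simp
    ring
  have hEanti : AntitoneOn E (Set.Ici (0:ℝ)) := by
    apply antitoneOn_of_deriv_nonpos (convex_Ici 0)
    · exact Continuous.continuousOn (by
        exact (Real.continuous_exp.comp (continuous_const.mul
          ((hu_diff.continuous.pow 2).sub hu_diff.continuous))).mul (hw_cont.pow 2))
    · exact fun x _ => ((hE x).differentiableAt).differentiableWithinAt
    · intro x hx
      rw [interior_Ici] at hx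
      rw [(hE x).deriv]
      have hu0 : 0 < u₀ x := (hbound x).1
      have hu1 : u₀ x < 1 := (hbound x).2
      have huh : u₀ x < 1 / 2 := by
        have := hmono hx
        rwa [hnorm] at this
      have hfp : fpoly (u₀ x) ≤ 0 := by
        rw [fpoly]
        have heq : u₀ x * (2 * u₀ x - 1) * (1 - u₀ x)
            = (u₀ x * (1 - u₀ x)) * (2 * u₀ x - 1) := by ring
        rw [heq]
        exact mul_nonpos_of_nonneg_of_nonpos
          (mul_nonneg hu0.le (by linarith)) (by linarith)
      have hwle : w x ≤ 0 :=
        hasDerivAt_nonpos_of_antitone hmono.antitone ((hu_diff x).hasDerivAt)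
      have h1 : 0 ≤ fpoly (u₀ x) * w x := by nlinarith
      have h2 : 0 < Real.exp ((4 * S / r) * ((u₀ x) ^ 2 - u₀ x)) := Real.exp_pos _
      nlinarith [mul_nonneg (mul_pos hS h2).le h1]
  -- w is eventually nonzero
  have hwev : ∀ᶠ x in atTop, w x ≠ 0 := by
    have hhalf : ∀ᶠ x in atTop, C / 2 < |w x| * Real.exp (a * x) :=
      hCasym.eventually (lt_mem_nhds (by linarith : C / 2 < C))
    filter_upwards [hhalf] with x hx
    intro h0
    rw [h0] at hx
    simp at hx
    nlinarith [Real.exp_pos (a * x), hx]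
  -- w nonzero on [0, ∞)
  have hwne : ∀ x : ℝ, 0 ≤ x → w x ≠ 0 := by
    intro x hx
    obtain ⟨y, hy1, hy2⟩ := (hwev.and (eventually_ge_atTop x)).exists
    have hEy : 0 < E y := by
      have h1 : (0:ℝ) < (w y) ^ 2 := by positivity
      exact mul_pos (Real.exp_pos _) h1
    have hle : E y ≤ E x := hEanti (Set.mem_Ici.mpr hx)
      (Set.mem_Ici.mpr (le_trans hx hy2)) hy2
    intro h0
    have hEx : E x = 0 := by rw [hE_def]; simp [h0]
    rw [hEx] at hle
    linarith
  -- the integrand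
  set Iz : ℝ → ℝ := fun z => ((w z) ^ 2)⁻¹ * Real.exp (-(4 * S / r) * ((u₀ z) ^ 2 - u₀ z))
    with hIz_def
  have hIcont : ContinuousOn Iz (Set.Ici (0:ℝ)) := by
    apply ContinuousOn.mul
    · exact ContinuousOn.inv₀ ((hw_cont.pow 2).continuousOn)
        (fun z hz => pow_ne_zero 2 (hwne z hz))
    · exact (Real.continuous_exp.comp (continuous_const.mul
        ((hu_diff.continuous.pow 2).sub hu_diff.continuous))).continuousOn
  -- asymptotics of the integrand
  have hIlim : Tendsto (fun z => Iz z * Real.exp (-(2 * a) * z)) atTop (𝓝 ((C ^ 2)⁻¹)) := by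
    have heq : ∀ z : ℝ, Iz z * Real.exp (-(2 * a) * z)
        = Real.exp (-(4 * S / r) * ((u₀ z) ^ 2 - u₀ z))
          * ((|w z| * Real.exp (a * z)) ^ 2)⁻¹ := by
      intro z
      have h1 : (|w z| * Real.exp (a * z)) ^ 2 = (w z) ^ 2 * Real.exp (2 * a * z) := by
        rw [mul_pow, sq_abs]
        congr 1
        rw [pow_two, ← Real.exp_add]
        ring_nf
      rw [h1, mul_inv, ← Real.exp_neg]
      rw [hIz_def]
      ring_nf
    have h2 : Tendsto (fun z => -(4 * S / r) * ((u₀ z) ^ 2 - u₀ z)) atTop (𝓝 0) := by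
      have h3 : Tendsto (fun z => (u₀ z) ^ 2 - u₀ z) atTop (𝓝 ((0:ℝ) ^ 2 - 0)) :=
        (hlim0.pow 2).sub hlim0
      have h4 := h3.const_mul (-(4 * S / r))
      simpa using h4
    have h5 : Tendsto (fun z => Real.exp (-(4 * S / r) * ((u₀ z) ^ 2 - u₀ z))) atTop (𝓝 1) := by
      have := (Real.continuous_exp.tendsto 0).comp h2
      simpa [Function.comp_def] using this
    have h6 : Tendsto (fun z => ((|w z| * Real.exp (a * z)) ^ 2)⁻¹) atTop (𝓝 ((C ^ 2)⁻¹)) :=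
      (hCasym.pow 2).inv₀ (pow_ne_zero 2 hC.ne')
    have h7 := h5.mul h6
    rw [one_mul] at h7
    exact Tendsto.congr (fun z => (heq z).symm) h7
  -- the integral asymptotics
  have hJ : Tendsto (fun x => (∫ z in (0:ℝ)..x, Iz z) * Real.exp (-(2 * a) * x)) atTop
      (𝓝 ((C ^ 2)⁻¹ / (2 * a))) := key_tendsto ha hIcont hIlim
  -- main limit
  have hmain : Tendsto (fun x : ℝ => |vzero S r u₀ x| * Real.exp (-a * x)) atTop
      (𝓝 (1 / (2 * C * a))) := by
    have hprod := hCasym.mul hJ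
    have hval : C * ((C ^ 2)⁻¹ / (2 * a)) = 1 / (2 * C * a) := by
      field_simp
    rw [hval] at hprod
    apply Tendsto.congr' _ hprod
    filter_upwards [eventually_ge_atTop (0:ℝ)] with x hx
    have hint_nonneg : 0 ≤ ∫ z in (0:ℝ)..x, Iz z := by
      apply intervalIntegral.integral_nonneg hx
      intro z _
      have : (0:ℝ) ≤ ((w z) ^ 2)⁻¹ := by positivity
      exact mul_nonneg this (Real.exp_pos _).le
    have hv : vzero S r u₀ x = w x * ∫ z in (0:ℝ)..x, Iz z := rfl
    rw [hv, abs_mul, abs_of_nonneg hint_nonneg]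
    have hexp : Real.exp (a * x) * Real.exp (-(2 * a) * x) = Real.exp (-a * x) := by
      rw [← Real.exp_add]
      ring_nf
    calc |w x| * Real.exp (a * x) * ((∫ z in (0:ℝ)..x, Iz z) * Real.exp (-(2 * a) * x))
        = |w x| * (∫ z in (0:ℝ)..x, Iz z)
          * (Real.exp (a * x) * Real.exp (-(2 * a) * x)) := by ring
      _ = |w x| * (∫ z in (0:ℝ)..x, Iz z) * Real.exp (-a * x) := by rw [hexp]
  constructor
  · exact hmain
  · rintro ⟨M, hM⟩
    have hpos : 0 < 1 / (2 * C * a) := by positivity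
    have hAT : Tendsto (fun x : ℝ => |vzero S r u₀ x|) atTop atTop := by
      have hexpT : Tendsto (fun x : ℝ => Real.exp (a * x)) atTop atTop :=
        Real.tendsto_exp_atTop.comp (Tendsto.const_mul_atTop ha tendsto_id)
      have := Tendsto.pos_mul_atTop hpos hmain hexpT
      apply this.congr
      intro x
      rw [mul_assoc, ← Real.exp_add]
      norm_num
    obtain ⟨x, hx⟩ := (hAT.eventually_gt_atTop M).exists
    linarith [hM x]
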